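/- (Weak duality.) Let M ⊆ ℤ^{n₁} × ℝ^{n₂} be a monoid, A ∈ ℝ^{m×n₁}, G ∈ ℝ^{m×n₂}, b ∈ ℝ^m, c ∈ ℝ^{n₁}, d ∈ ℝ^{n₂}, and let I(M) be a generating set of M. Let D ⊆ ℝ^m contain Ω = {Au + Gv : (u,v) ∈ M}, and let f : D → ℝ be subadditive with f(0) = 0 and f(Au + Gv) ≤ c^Tu + d^Tv for all (u,v) ∈ I(M). Then for every (x,y) ∈ M with Ax + Gy = b, one has f(b) ≤ c^Tx + d^Ty. -/

import Mathlib

open Matrix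

/-- `I` is a generating set of the monoid `M`: `I ⊆ M` and every element of `M`
is a finite nonnegative-integer combination of elements of `I`. -/
def IsGenSet {V : Type*} [AddCommMonoid V] [Module ℝ V] (M I : Set V) : Prop :=
  I ⊆ M ∧ ∀ w ∈ M, ∃ (p : ℕ) (h : Fin p → V) (lam : Fin p → ℕ),
    (∀ i, h i ∈ I) ∧ w = ∑ i, (lam i : ℝ) • h i

/-- Weak duality: a feasible subadditive dual function `f` lower bounds the objective
value of every primal feasible solution. -/
theorem weak_duality {n₁ n₂ m : ℕ}
    (M : Set ((Fin n₁ → ℝ) × (Fin n₂ → ℝ)))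
    (hMzero : (0 : (Fin n₁ → ℝ) × (Fin n₂ → ℝ)) ∈ M)
    (hMadd : ∀ p ∈ M, ∀ q ∈ M, p + q ∈ M)
    (hMint : ∀ p ∈ M, ∀ i, ∃ k : ℤ, p.1 i = (k : ℝ))
    (A : Matrix (Fin m) (Fin n₁) ℝ) (G : Matrix (Fin m) (Fin n₂) ℝ)
    (b : Fin m → ℝ) (c : Fin n₁ → ℝ) (d : Fin n₂ → ℝ)
    (I : Set ((Fin n₁ → ℝ) × (Fin n₂ → ℝ))) (hI : IsGenSet M I)
    (D : Set (Fin m → ℝ))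
    (hD : {ω | ∃ p ∈ M, A.mulVec p.1 + G.mulVec p.2 = ω} ⊆ D)
    (f : (Fin m → ℝ) → ℝ)
    (hsub : ∀ u ∈ D, ∀ v ∈ D, u + v ∈ D → f (u + v) ≤ f u + f v)
    (hf0 : f 0 = 0)
    (hfeasdual : ∀ p ∈ I, f (A.mulVec p.1 + G.mulVec p.2) ≤ c ⬝ᵥ p.1 + d ⬝ᵥ p.2) :
    ∀ p ∈ M, A.mulVec p.1 + G.mulVec p.2 = b → f b ≤ c ⬝ᵥ p.1 + d ⬝ᵥ p.2 := by
  have hsumM : ∀ L : List ((Fin n₁ → ℝ) × (Fin n₂ → ℝ)), (∀ q ∈ L, q ∈ M) → L.sum ∈ M := by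
    intro L
    induction L with
    | nil => intro _; simpa using hMzero
    | cons a L ih =>
        intro h
        rw [List.sum_cons]
        exact hMadd a (h a List.mem_cons_self) L.sum
          (ih fun q hq => h q (List.mem_cons_of_mem a hq))
  have key : ∀ L : List ((Fin n₁ → ℝ) × (Fin n₂ → ℝ)), (∀ q ∈ L, q ∈ I) →
      f (A.mulVec L.sum.1 + G.mulVec L.sum.2) ≤
        (L.map (fun q => c ⬝ᵥ q.1 + d ⬝ᵥ q.2)).sum := by
    intro L
    induction L with
    | nil => simp [Matrix.mulVec_zero, hf0]
    | cons a L ih =>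
        intro h
        have ha : a ∈ I := h a List.mem_cons_self
        have hLI : ∀ q ∈ L, q ∈ I := fun q hq => h q (List.mem_cons_of_mem a hq)
        have haM : a ∈ M := hI.1 ha
        have hLM : L.sum ∈ M := hsumM L (fun q hq => hI.1 (hLI q hq))
        have hx : A.mulVec a.1 + G.mulVec a.2 ∈ D := hD ⟨a, haM, rfl⟩
        have hy : A.mulVec L.sum.1 + G.mulVec L.sum.2 ∈ D := hD ⟨L.sum, hLM, rfl⟩
        have hxy : (A.mulVec a.1 + G.mulVec a.2) +
            (A.mulVec L.sum.1 + G.mulVec L.sum.2) ∈ D := by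
          refine hD ⟨a + L.sum, hMadd a haM L.sum hLM, ?_⟩
          simp only [Prod.fst_add, Prod.snd_add, Matrix.mulVec_add]
          abel
        have heq : A.mulVec ((a :: L).sum).1 + G.mulVec ((a :: L).sum).2 =
            (A.mulVec a.1 + G.mulVec a.2) + (A.mulVec L.sum.1 + G.mulVec L.sum.2) := by
          rw [List.sum_cons]
          simp only [Prod.fst_add, Prod.snd_add, Matrix.mulVec_add]
          abel
        rw [heq, List.map_cons, List.sum_cons]
        calc f ((A.mulVec a.1 + G.mulVec a.2) + (A.mulVec L.sum.1 + G.mulVec L.sum.2))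
            ≤ f (A.mulVec a.1 + G.mulVec a.2) + f (A.mulVec L.sum.1 + G.mulVec L.sum.2) :=
              hsub _ hx _ hy hxy
          _ ≤ (c ⬝ᵥ a.1 + d ⬝ᵥ a.2) + (L.map (fun q => c ⬝ᵥ q.1 + d ⬝ᵥ q.2)).sum :=
              add_le_add (hfeasdual a ha) (ih hLI)
  have hphi : ∀ L : List ((Fin n₁ → ℝ) × (Fin n₂ → ℝ)),
      (L.map (fun q => c ⬝ᵥ q.1 + d ⬝ᵥ q.2)).sum = c ⬝ᵥ L.sum.1 + d ⬝ᵥ L.sum.2 := by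
    intro L
    induction L with
    | nil => simp
    | cons a L ih =>
        simp only [List.map_cons, List.sum_cons, ih, Prod.fst_add, Prod.snd_add,
          dotProduct_add]
        ring
  intro p hp hpb
  obtain ⟨N, h, lam, hhI, hsum⟩ := hI.2 p hp
  set L : List ((Fin n₁ → ℝ) × (Fin n₂ → ℝ)) :=
    (List.finRange N).flatMap (fun i => List.replicate (lam i) (h i)) with hL
  have hLmem : ∀ q ∈ L, q ∈ I := by
    intro q hq
    rw [hL, List.mem_flatMap] at hq
    obtain ⟨i, _, hq⟩ := hq
    rw [List.eq_of_mem_replicate hq]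
    exact hhI i
  have hLsum : L.sum = p := by
    rw [hL, List.flatMap_def, List.sum_flatten, List.map_map, hsum, Fin.sum_univ_def]
    refine congrArg List.sum (List.map_congr_left fun i _ => ?_)
    simp only [Function.comp_apply]
    rw [List.sum_replicate]
    exact (Nat.cast_smul_eq_nsmul ℝ _ _).symm
  have := key L hLmem
  rw [hLsum] at this
  rw [hphi L, hLsum] at this
  rwa [hpb] at this
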